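/- Let f : ℝⁿ → ℝ and g_i : ℝⁿ → ℝ, i = 1,…,m, be continuously differentiable, and for τ > 0 let P_τ(x) = f(x) + (τ/2)·Σ_{i=1}^m max(0, g_i(x))². Let (Ω, ℱ, ℙ) be a probability space, C ⊆ ℝⁿ a compact set, and x^k : Ω → ℝⁿ, k ∈ ℕ, measurable maps with x^k(ω) ∈ C for all k and ω. Let (τ_k) and (ε_k) be sequences with τ_k → ∞, ε_k → 0, and ∫ ‖∇P_{τ_k}(x^k)‖ dℙ ≤ ε_k for all k. Then: (i) ‖∇P_{τ_k}(x^k)‖ converges to 0 in probability; and (ii) there exists a strictly increasing sequence of indices (k_j) such that for ℙ-almost every ω there exist x̄ ∈ C and a subsequence of (x^{k_j}(ω)) converging to x̄ along which ‖∇P_{τ_{k_j}}(x^{k_j}(ω))‖ → 0; moreover, for any such limit point x̄ at which the E-LICQ holds, x̄ is feasible (g_i(x̄) ≤ 0 for all i) and x̄ is a KKT point of the problem min f(x) s.t. g_i(x) ≤ 0, i = 1,…,m. -/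

import Mathlib

open Filter Topology

lemma maxsq_hasDerivAt (t : ℝ) :
    HasDerivAt (fun t : ℝ => max 0 t ^ 2) (2 * max 0 t) t := by
  rcases lt_trichotomy t 0 with h | h | h
  · have : (fun t : ℝ => max 0 t ^ 2) =ᶠ[𝓝 t] fun _ => (0:ℝ) := by
      filter_upwards [eventually_lt_nhds h] with s hs
      simp [max_eq_left hs.le]
    rw [max_eq_left h.le, mul_zero]
    exact (hasDerivAt_const t (0:ℝ)).congr_of_eventuallyEq this
  · subst h
    rw [hasDerivAt_iff_isLittleO]
    simp only [max_self, mul_zero, smul_zero, sub_zero, ne_eq, OfNat.ofNat_ne_zero,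
      not_false_eq_true, zero_pow]
    rw [Asymptotics.isLittleO_iff]
    intro c hc
    filter_upwards [Metric.eventually_nhds_iff.2 ⟨c, hc, fun {y} hy => hy⟩] with s hs
    have h1 : |max 0 s| ≤ |s| := by
      rcases le_or_gt s 0 with h' | h'
      · simp [max_eq_left h']
      · simp [max_eq_right h'.le, abs_of_nonneg h'.le]
    calc ‖max 0 s ^ 2‖ = |max 0 s| * |max 0 s| := by
          rw [Real.norm_eq_abs, ← abs_mul, ← sq]
      _ ≤ |s| * |s| := mul_le_mul h1 h1 (abs_nonneg _) (abs_nonneg _)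
      _ ≤ c * ‖s‖ := by
          rw [Real.norm_eq_abs]
          have : |s| ≤ c := by simpa [Real.dist_eq] using hs.le
          exact mul_le_mul_of_nonneg_right this (abs_nonneg _)
  · have : (fun t : ℝ => max 0 t ^ 2) =ᶠ[𝓝 t] fun s => s ^ 2 := by
      filter_upwards [eventually_gt_nhds h] with s hs
      simp [max_eq_right hs.le]
    rw [max_eq_right h.le]
    have h2 := (hasDerivAt_pow 2 t).congr_of_eventuallyEq this
    simpa [mul_comm] using h2

lemma maxsq_contDiff : ContDiff ℝ 1 (fun t : ℝ => max 0 t ^ 2) := by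
  rw [contDiff_one_iff_deriv]
  refine ⟨fun t => (maxsq_hasDerivAt t).differentiableAt, ?_⟩
  have : deriv (fun t : ℝ => max 0 t ^ 2) = fun t => 2 * max 0 t :=
    funext fun t => (maxsq_hasDerivAt t).deriv
  rw [this]
  exact continuous_const.mul (continuous_const.max continuous_id)

lemma gradient_eq_of_hasGradientAt {F : Type*} [NormedAddCommGroup F] [InnerProductSpace ℝ F]
    [CompleteSpace F] {f : F → ℝ} {f' x : F} (h : HasGradientAt f f' x) :
    gradient f x = f' := by
  rw [gradient, h.hasFDerivAt.fderiv, LinearIsometryEquiv.symm_apply_apply]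

section Pgrad

variable {n m : ℕ} {f : EuclideanSpace ℝ (Fin n) → ℝ}
  {g : Fin m → EuclideanSpace ℝ (Fin n) → ℝ}

lemma hasGradientAt_P (hf : ContDiff ℝ 1 f) (hg : ∀ i, ContDiff ℝ 1 (g i)) (τ : ℝ)
    (x : EuclideanSpace ℝ (Fin n)) :
    HasGradientAt (fun y => f y + (τ / 2) * ∑ i, max 0 (g i y) ^ 2)
      (gradient f x + ∑ i, (τ * max 0 (g i x)) • gradient (g i) x) x := by
  set D := InnerProductSpace.toDual ℝ (EuclideanSpace ℝ (Fin n))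
  have hF : HasFDerivAt f (D (gradient f x)) x :=
    (hf.differentiable one_ne_zero x).hasGradientAt.hasFDerivAt
  have hGi : ∀ i, HasFDerivAt (g i) (D (gradient (g i) x)) x := fun i =>
    ((hg i).differentiable one_ne_zero x).hasGradientAt.hasFDerivAt
  have hci : ∀ i, HasFDerivAt (fun y => max 0 (g i y) ^ 2)
      ((2 * max 0 (g i x)) • D (gradient (g i) x)) x := fun i =>
    (maxsq_hasDerivAt (g i x)).comp_hasFDerivAt x (hGi i)
  have hsum : HasFDerivAt (fun y => ∑ i, max 0 (g i y) ^ 2)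
      (∑ i, (2 * max 0 (g i x)) • D (gradient (g i) x)) x :=
    HasFDerivAt.fun_sum (fun i _ => hci i)
  have htot := hF.fun_add (hsum.const_mul (τ / 2))
  rw [hasGradientAt_iff_hasFDerivAt]
  refine htot.congr_fderiv (Eq.symm ?_)
  rw [map_add, map_sum]
  congr 1
  rw [Finset.smul_sum]
  refine Finset.sum_congr rfl fun i _ => ?_
  rw [map_smul, smul_smul]
  congr 1
  ring

lemma gradient_P_eq (hf : ContDiff ℝ 1 f) (hg : ∀ i, ContDiff ℝ 1 (g i)) (τ : ℝ)
    (x : EuclideanSpace ℝ (Fin n)) :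
    gradient (fun y => f y + (τ / 2) * ∑ i, max 0 (g i y) ^ 2) x
      = gradient f x + ∑ i, (τ * max 0 (g i x)) • gradient (g i) x :=
  gradient_eq_of_hasGradientAt (hasGradientAt_P hf hg τ x)

lemma gradient_continuous (hf : ContDiff ℝ 1 f) :
    Continuous (fun x => gradient f x) := by
  have : (fun x => gradient f x)
      = fun x => (InnerProductSpace.toDual ℝ (EuclideanSpace ℝ (Fin n))).symm (fderiv ℝ f x) :=
    rfl
  rw [this]
  exact (LinearIsometryEquiv.continuous _).comp (hf.continuous_fderiv one_ne_zero)

lemma gradient_P_continuous (hf : ContDiff ℝ 1 f) (hg : ∀ i, ContDiff ℝ 1 (g i)) (τ : ℝ) :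
    Continuous (fun x => gradient (fun y => f y + (τ / 2) * ∑ i, max 0 (g i y) ^ 2) x) := by
  have : (fun x => gradient (fun y => f y + (τ / 2) * ∑ i, max 0 (g i y) ^ 2) x)
      = fun x => gradient f x + ∑ i, (τ * max 0 (g i x)) • gradient (g i) x :=
    funext fun x => gradient_P_eq hf hg τ x
  rw [this]
  refine (gradient_continuous hf).add (continuous_finset_sum _ fun i _ => ?_)
  exact (continuous_const.mul (continuous_const.max ((hg i).continuous))).smul
    (gradient_continuous (hg i))

end Pgrad

section KKT

variable {n m : ℕ} {f : EuclideanSpace ℝ (Fin n) → ℝ}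
  {g : Fin m → EuclideanSpace ℝ (Fin n) → ℝ}

set_option maxHeartbeats 1000000 in
lemma kkt_of_subseq (hf : ContDiff ℝ 1 f) (hg : ∀ i, ContDiff ℝ 1 (g i))
    (xbar : EuclideanSpace ℝ (Fin n)) (z : ℕ → EuclideanSpace ℝ (Fin n)) (t : ℕ → ℝ)
    (htpos : ∀ j, 0 < t j) (ht : Tendsto t atTop atTop)
    (hz : Tendsto z atTop (𝓝 xbar))
    (hGrad : Tendsto
      (fun j => ‖gradient (fun y => f y + (t j / 2) * ∑ i, max 0 (g i y) ^ 2) (z j)‖)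
      atTop (𝓝 0))
    (hLI : LinearIndependent ℝ
      (fun i : {i : Fin m // 0 ≤ g i xbar} => gradient (g i.1) xbar)) :
    (∀ i, g i xbar ≤ 0) ∧
    ∃ lam : Fin m → ℝ, (∀ i, 0 ≤ lam i) ∧
      gradient f xbar + ∑ i, lam i • gradient (g i) xbar = 0 ∧
      (∀ i, lam i * g i xbar = 0) := by
  classical
  -- linear-algebra left inverse
  let T : ({i : Fin m // 0 ≤ g i xbar} → ℝ) →ₗ[ℝ] EuclideanSpace ℝ (Fin n) :=
    { toFun := fun c => ∑ i', c i' • gradient (g i'.1) xbar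
      map_add' := fun a b => by simp [add_smul, Finset.sum_add_distrib]
      map_smul' := fun r a => by simp [Finset.smul_sum, smul_smul] }
  have hker : LinearMap.ker T = ⊥ := by
    rw [LinearMap.ker_eq_bot']
    intro c hc
    funext i'
    exact Fintype.linearIndependent_iff.mp hLI c hc i'
  obtain ⟨L₀, hL₀⟩ := T.exists_leftInverse_of_injective hker
  let L : EuclideanSpace ℝ (Fin n) →L[ℝ] ({i : Fin m // 0 ≤ g i xbar} → ℝ) :=
    L₀.toContinuousLinearMap
  have hLw : ∀ c : {i : Fin m // 0 ≤ g i xbar} → ℝ,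
      L (∑ i', c i' • gradient (g i'.1) xbar) = c := by
    intro c
    have := LinearMap.ext_iff.mp hL₀ c
    simpa [L, T] using this
  -- sequences
  obtain ⟨Λ, hΛdef⟩ : ∃ Λ : ℕ → ({i : Fin m // 0 ≤ g i xbar} → ℝ),
      Λ = fun j i' => t j * max 0 (g i'.1 (z j)) := ⟨_, rfl⟩
  obtain ⟨G, hGdef⟩ : ∃ G : ℕ → EuclideanSpace ℝ (Fin n),
      G = fun j => gradient (fun y => f y + (t j / 2) * ∑ i, max 0 (g i y) ^ 2) (z j) := ⟨_, rfl⟩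
  obtain ⟨Ssum, hSdef⟩ : ∃ S : ℕ → EuclideanSpace ℝ (Fin n),
      S = fun j => ∑ i', Λ j i' • gradient (g i'.1) (z j) := ⟨_, rfl⟩
  obtain ⟨u, hudef⟩ : ∃ u : ℕ → EuclideanSpace ℝ (Fin n),
      u = fun j => ∑ i', Λ j i' • gradient (g i'.1) xbar := ⟨_, rfl⟩
  obtain ⟨D, hDdef⟩ : ∃ D : ℕ → ℝ,
      D = fun j => ∑ i' : {i : Fin m // 0 ≤ g i xbar},
        ‖gradient (g i'.1) (z j) - gradient (g i'.1) xbar‖ := ⟨_, rfl⟩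
  have hzc : ∀ i, Tendsto (fun j => g i (z j)) atTop (𝓝 (g i xbar)) := fun i =>
    ((hg i).continuous.tendsto xbar).comp hz
  have hwj : ∀ i, Tendsto (fun j => gradient (g i) (z j)) atTop (𝓝 (gradient (g i) xbar)) :=
    fun i => ((gradient_continuous (hg i)).tendsto xbar).comp hz
  have hGf : Tendsto (fun j => gradient f (z j)) atTop (𝓝 (gradient f xbar)) :=
    ((gradient_continuous hf).tendsto xbar).comp hz
  have hG0 : Tendsto G atTop (𝓝 0) := by
    rw [hGdef]; exact tendsto_zero_iff_norm_tendsto_zero.mpr hGrad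
  have hD0 : Tendsto D atTop (𝓝 0) := by
    have h1 : ∀ i' : {i : Fin m // 0 ≤ g i xbar}, Tendsto
        (fun j => ‖gradient (g i'.1) (z j) - gradient (g i'.1) xbar‖) atTop (𝓝 0) := fun i' => by
      simpa using ((hwj i'.1).sub
        (tendsto_const_nhds : Tendsto _ atTop (𝓝 (gradient (g i'.1) xbar)))).norm
    have h2 := tendsto_finset_sum (Finset.univ) (fun i' _ => h1 i')
    rw [hDdef]
    simpa using h2
  -- eventually the full-sum gradient equals restricted sum
  have heq : ∀ᶠ j in atTop, G j = gradient f (z j) + Ssum j := by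
    have hvan : ∀ᶠ j in atTop, ∀ i, ¬ (0 ≤ g i xbar) → t j * max 0 (g i (z j)) = 0 := by
      rw [eventually_all]
      intro i
      by_cases hi : 0 ≤ g i xbar
      · exact Eventually.of_forall fun j h => absurd hi h
      · have : g i xbar < 0 := lt_of_not_ge hi
        filter_upwards [(hzc i).eventually (eventually_lt_nhds this)] with j hj _
        rw [max_eq_left hj.le, mul_zero]
    filter_upwards [hvan] with j hj
    simp only [hGdef]
    rw [gradient_P_eq hf hg (t j) (z j)]
    congr 1
    rw [hSdef, hΛdef]
    rw [← Finset.sum_filter_of_ne (p := fun i => 0 ≤ g i xbar) (fun i _ h => by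
      by_contra hpi
      exact h (by simp [hj i hpi]))]
    rw [Finset.sum_subtype (p := fun i => 0 ≤ g i xbar)
      (Finset.univ.filter fun i => 0 ≤ g i xbar) (fun i => by simp)
      (fun i => (t j * max 0 (g i (z j))) • gradient (g i) (z j))]
  -- norm bound on coefficients
  have hΛeq : ∀ j, Λ j = L (u j) := fun j => by rw [hudef]; exact (hLw (Λ j)).symm
  have hubound : ∀ j, ‖u j - Ssum j‖ ≤ ‖Λ j‖ * D j := by
    intro j
    rw [hudef, hSdef, ← Finset.sum_sub_distrib]
    refine (norm_sum_le _ _).trans ?_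
    rw [hDdef, Finset.mul_sum]
    refine Finset.sum_le_sum fun i' _ => ?_
    rw [← smul_sub, norm_smul, norm_sub_rev]
    exact mul_le_mul_of_nonneg_right (norm_le_pi_norm (Λ j) i') (norm_nonneg _)
  have hBnd : ∀ᶠ j in atTop, ‖G j - gradient f (z j)‖ ≤ ‖gradient f xbar‖ + 1 := by
    have h1 : Tendsto (fun j => ‖G j - gradient f (z j)‖) atTop (𝓝 ‖gradient f xbar‖) := by
      simpa using (hG0.sub hGf).norm
    exact h1.eventually (eventually_le_nhds (lt_add_one _))
  have hsmall : ∀ᶠ j in atTop, ‖L‖ * D j ≤ 1 / 2 := by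
    have h1 : Tendsto (fun j => ‖L‖ * D j) atTop (𝓝 0) := by
      simpa using hD0.const_mul ‖L‖
    exact h1.eventually (eventually_le_nhds (by norm_num))
  have hRbound : ∀ᶠ j in atTop, ‖Λ j‖ ≤ 2 * (‖L‖ * (‖gradient f xbar‖ + 1)) := by
    filter_upwards [heq, hBnd, hsmall] with j h1 h2 h3
    have hu1 : ‖u j‖ ≤ ‖G j - gradient f (z j)‖ + ‖Λ j‖ * D j := by
      have h4 : u j = (G j - gradient f (z j)) + (u j - Ssum j) := by
        rw [h1]; abel
      rw [h4]
      exact (norm_add_le _ _).trans (by gcongr; exact hubound j)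
    have hL1 : ‖Λ j‖ ≤ ‖L‖ * ‖u j‖ := by
      rw [hΛeq j]; exact L.le_opNorm _
    have hDnn : 0 ≤ D j := by
      rw [hDdef]; exact Finset.sum_nonneg fun _ _ => norm_nonneg _
    have hΛnn : 0 ≤ ‖Λ j‖ := norm_nonneg _
    have hLnn : 0 ≤ ‖L‖ := norm_nonneg _
    nlinarith [mul_le_mul_of_nonneg_right h3 hΛnn,
      mul_le_mul_of_nonneg_left hu1 hLnn]
  obtain ⟨N, hN⟩ := eventually_atTop.mp hRbound
  -- Bolzano–Weierstrass
  have hmem : ∀ j, Λ (j + N) ∈ Metric.closedBall (0 : {i : Fin m // 0 ≤ g i xbar} → ℝ)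
      (2 * (‖L‖ * (‖gradient f xbar‖ + 1))) :=
    fun j => mem_closedBall_zero_iff.mpr (hN (j + N) (Nat.le_add_left _ _))
  obtain ⟨lam0, _, φ, hφ, hconv⟩ :=
    tendsto_subseq_of_bounded Metric.isBounded_closedBall hmem
  obtain ⟨ψ, hψdef⟩ : ∃ ψ : ℕ → ℕ, ψ = fun j => φ j + N := ⟨_, rfl⟩
  have hψ : Tendsto ψ atTop atTop := by
    rw [hψdef]
    exact tendsto_atTop_mono (fun j => Nat.le_add_right (φ j) N) hφ.tendsto_atTop
  have hΛψ : Tendsto (fun j => Λ (ψ j)) atTop (𝓝 lam0) := by rw [hψdef]; exact hconv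
  have hΛi : ∀ i', Tendsto (fun j => Λ (ψ j) i') atTop (𝓝 (lam0 i')) :=
    fun i' => tendsto_pi_nhds.mp hΛψ i'
  -- feasibility
  have hfeas : ∀ i, g i xbar ≤ 0 := by
    intro i
    by_contra hpos
    push_neg at hpos
    have hpi : 0 ≤ g i xbar := hpos.le
    have hmax : Tendsto (fun j => max 0 (g i (z (ψ j)))) atTop (𝓝 (g i xbar)) := by
      have h1 := Tendsto.max
        (tendsto_const_nhds : Tendsto (fun _ : ℕ => (0:ℝ)) atTop (𝓝 0)) ((hzc i).comp hψ)
      rwa [max_eq_right hpi] at h1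
    have hatTop : Tendsto (fun j => t (ψ j) * max 0 (g i (z (ψ j)))) atTop atTop :=
      Tendsto.atTop_mul_pos hpos (ht.comp hψ) hmax
    have : Tendsto (fun j => t (ψ j) * max 0 (g i (z (ψ j)))) atTop (𝓝 (lam0 ⟨i, hpi⟩)) := by
      have := hΛi ⟨i, hpi⟩
      rwa [hΛdef] at this
    exact not_tendsto_nhds_of_tendsto_atTop hatTop _ this
  -- stationarity
  have hstat : gradient f xbar + ∑ i', lam0 i' • gradient (g i'.1) xbar = 0 := by
    have hlim1 : Tendsto (fun j => gradient f (z (ψ j)) + u (ψ j)) atTop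
        (𝓝 (gradient f xbar + ∑ i', lam0 i' • gradient (g i'.1) xbar)) := by
      refine (hGf.comp hψ).add ?_
      rw [hudef]
      exact tendsto_finset_sum _ fun i' _ => (hΛi i').smul tendsto_const_nhds
    have hdiff0 : Tendsto (fun j => u (ψ j) - Ssum (ψ j)) atTop (𝓝 0) := by
      rw [tendsto_zero_iff_norm_tendsto_zero]
      refine squeeze_zero' (Eventually.of_forall fun _ => norm_nonneg _)
        ((hψ.eventually hRbound).mono fun j hj =>
          (hubound (ψ j)).trans (mul_le_mul_of_nonneg_right hj (by
            rw [hDdef]; exact Finset.sum_nonneg fun _ _ => norm_nonneg _))) ?_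
      simpa using (hD0.comp hψ).const_mul (2 * (‖L‖ * (‖gradient f xbar‖ + 1)))
    have hlim2 : Tendsto (fun j => gradient f (z (ψ j)) + u (ψ j)) atTop (𝓝 0) := by
      have hev : ∀ᶠ j in atTop, gradient f (z (ψ j)) + u (ψ j)
          = G (ψ j) + (u (ψ j) - Ssum (ψ j)) := by
        filter_upwards [hψ.eventually heq] with j hj
        rw [hj]; abel
      refine Tendsto.congr' (hev.mono fun j hj => hj.symm) ?_
      simpa using (hG0.comp hψ).add hdiff0
    exact tendsto_nhds_unique hlim1 hlim2
  have hnn : ∀ i', 0 ≤ lam0 i' := fun i' =>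
    ge_of_tendsto (hΛi i')
      (Eventually.of_forall fun j => by
        rw [hΛdef]; exact mul_nonneg (htpos _).le (le_max_left _ _))
  refine ⟨hfeas, fun i => if h : 0 ≤ g i xbar then lam0 ⟨i, h⟩ else 0,
    fun i => ?_, ?_, fun i => ?_⟩
  · by_cases h : 0 ≤ g i xbar <;> simp [h, hnn]
  · rw [← hstat]
    congr 1
    rw [← Finset.sum_filter_of_ne (p := fun i => 0 ≤ g i xbar) (fun i _ h => by
      by_contra hpi
      exact h (by simp [hpi]))]
    rw [Finset.sum_subtype (p := fun i => 0 ≤ g i xbar)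
      (Finset.univ.filter fun i => 0 ≤ g i xbar) (fun i => by simp)
      (fun i => (if h : 0 ≤ g i xbar then lam0 ⟨i, h⟩ else 0) • gradient (g i) xbar)]
    exact Finset.sum_congr rfl fun i' _ => by simp [i'.2]
  · by_cases h : 0 ≤ g i xbar
    · have h0 : g i xbar = 0 := le_antisymm (hfeas i) h
      simp [h0]
    · simp [h]

end KKT

open MeasureTheory

theorem stmt13 {n m : ℕ} (f : EuclideanSpace ℝ (Fin n) → ℝ)
    (g : Fin m → EuclideanSpace ℝ (Fin n) → ℝ)
    (hf : ContDiff ℝ 1 f) (hg : ∀ i, ContDiff ℝ 1 (g i))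
    (P : ℝ → EuclideanSpace ℝ (Fin n) → ℝ)
    (hP : P = fun τ x => f x + (τ / 2) * ∑ i, max 0 (g i x) ^ 2)
    {Ω : Type*} [MeasurableSpace Ω] (ℙ : Measure Ω) [IsProbabilityMeasure ℙ]
    (C : Set (EuclideanSpace ℝ (Fin n))) (hCcompact : IsCompact C)
    (x : ℕ → Ω → EuclideanSpace ℝ (Fin n)) (hxmeas : ∀ k, Measurable (x k))
    (hxC : ∀ k ω, x k ω ∈ C)
    (τ : ℕ → ℝ) (hτpos : ∀ k, 0 < τ k) (hτ : Tendsto τ atTop atTop)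
    (ε : ℕ → ℝ) (hε : Tendsto ε atTop (nhds 0))
    (hint : ∀ k, ∫ ω, ‖gradient (P (τ k)) (x k ω)‖ ∂ℙ ≤ ε k) :
    (∀ η > (0 : ℝ),
      Tendsto (fun k => ℙ {ω | ‖gradient (P (τ k)) (x k ω)‖ > η}) atTop (nhds 0)) ∧
    ∃ ks : ℕ → ℕ, StrictMono ks ∧
      ∀ᵐ ω ∂ℙ,
        (∃ xbar ∈ C, ∃ s : ℕ → ℕ, StrictMono s ∧
          Tendsto (fun j => x (ks (s j)) ω) atTop (nhds xbar) ∧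
          Tendsto (fun j => ‖gradient (P (τ (ks (s j)))) (x (ks (s j)) ω)‖)
            atTop (nhds 0)) ∧
        (∀ xbar ∈ C,
          (∃ s : ℕ → ℕ, StrictMono s ∧
            Tendsto (fun j => x (ks (s j)) ω) atTop (nhds xbar) ∧
            Tendsto (fun j => ‖gradient (P (τ (ks (s j)))) (x (ks (s j)) ω)‖)
              atTop (nhds 0)) →
          LinearIndependent ℝ
            (fun i : {i : Fin m // 0 ≤ g i xbar} => gradient (g i.1) xbar) →
          (∀ i, g i xbar ≤ 0) ∧
          ∃ lam : Fin m → ℝ,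
            (∀ i, 0 ≤ lam i) ∧
            gradient f xbar + ∑ i, lam i • gradient (g i) xbar = 0 ∧
            (∀ i, lam i * g i xbar = 0)) := by
  have hcont : ∀ k, Continuous (fun y => gradient (P (τ k)) y) := fun k => by
    rw [hP]; exact gradient_P_continuous hf hg (τ k)
  have hmeasY : ∀ k, Measurable (fun ω => ‖gradient (P (τ k)) (x k ω)‖) := fun k =>
    ((hcont k).norm.measurable).comp (hxmeas k)
  have hIntY : ∀ k, Integrable (fun ω => ‖gradient (P (τ k)) (x k ω)‖) ℙ := by
    intro k
    obtain ⟨M, hM⟩ := hCcompact.exists_bound_of_continuousOn ((hcont k).continuousOn)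
    refine (integrable_const M).mono' (hmeasY k).aestronglyMeasurable
      (ae_of_all _ fun ω => ?_)
    rw [norm_norm]
    exact hM _ (hxC k ω)
  have key : ∀ η > (0 : ℝ),
      Tendsto (fun k => ℙ {ω | η ≤ ‖gradient (P (τ k)) (x k ω)‖}) atTop (nhds 0) := by
    intro η hη
    have hbound : ∀ k, ℙ {ω | η ≤ ‖gradient (P (τ k)) (x k ω)‖} ≤ ENNReal.ofReal (ε k / η) := by
      intro k
      have h1 := mul_meas_ge_le_integral_of_nonneg
        (ae_of_all ℙ fun ω => norm_nonneg (gradient (P (τ k)) (x k ω))) (hIntY k) η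
      have h2 : (ℙ {ω | η ≤ ‖gradient (P (τ k)) (x k ω)‖}).toReal ≤ ε k / η :=
        (le_div_iff₀ hη).mpr (by rw [measureReal_def] at h1; linarith [h1.trans (hint k)])
      rw [← ENNReal.ofReal_toReal (measure_ne_top ℙ _)]
      exact ENNReal.ofReal_le_ofReal h2
    have hupper : Tendsto (fun k => ENNReal.ofReal (ε k / η)) atTop (nhds 0) := by
      have := ENNReal.tendsto_ofReal (hε.div_const η)
      simpa using this
    exact tendsto_of_tendsto_of_tendsto_of_le_of_le tendsto_const_nhds hupper
      (fun k => zero_le) hbound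
  constructor
  · intro η hη
    refine tendsto_of_tendsto_of_tendsto_of_le_of_le tendsto_const_nhds (key η hη)
      (fun k => zero_le) (fun k => measure_mono fun ω hω => le_of_lt (Set.mem_setOf_eq ▸ hω))
  · have htim : TendstoInMeasure ℙ (fun k ω => ‖gradient (P (τ k)) (x k ω)‖) atTop
        (fun _ => (0 : ℝ)) := by
      refine tendstoInMeasure_of_ne_top fun η hη hηtop => ?_
      have hset : ∀ k, {ω | η ≤ edist ‖gradient (P (τ k)) (x k ω)‖ (0:ℝ)}
          = {ω | η.toReal ≤ ‖gradient (P (τ k)) (x k ω)‖} := by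
        intro k
        ext ω
        simp only [Set.mem_setOf_eq, edist_dist, dist_zero_right, norm_norm]
        exact ENNReal.le_ofReal_iff_toReal_le hηtop (norm_nonneg _)
      simpa only [hset] using key η.toReal (ENNReal.toReal_pos hη.ne' hηtop)
    obtain ⟨ks, hksmono, hae⟩ := htim.exists_seq_tendsto_ae
    refine ⟨ks, hksmono, ?_⟩
    filter_upwards [hae] with ω hω
    constructor
    · obtain ⟨xbar, hxbarC, s, hs, hconv⟩ :=
        hCcompact.tendsto_subseq (fun j => hxC (ks j) ω)
      exact ⟨xbar, hxbarC, s, hs, hconv, hω.comp hs.tendsto_atTop⟩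
    · rintro xbar _ ⟨s, hs, hzconv, hYconv⟩ hLI
      have := kkt_of_subseq hf hg xbar (fun j => x (ks (s j)) ω) (fun j => τ (ks (s j)))
        (fun j => hτpos _) (hτ.comp (hksmono.comp hs).tendsto_atTop) hzconv
        (by rw [hP] at hYconv; exact hYconv) hLI
      exact this
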